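/- Let (E,H,F,X,Y) be an osp(1|2)-representation on a complex vector space W on which the Casimir operator Ω is zero. Then W decomposes as the direct sum W = W⁺ ⊕ W⁻, where W⁺ = ker(Σ − (1/2)·id) and W⁻ = ker(Σ + (1/2)·id) are the eigenspaces of the super-Casimir Σ; moreover the sl(2) Casimir operator Ω₀ = E∘F + F∘E + (1/2)·H∘H acts as 0 on W⁺ and as the scalar −1/2 on W⁻. -/
import Mathlib


/-- An `osp(1|2)`-representation on a complex vector space `W`: a 5-tuple of
endomorphisms `(E,H,F,X,Y)` satisfying the twelve defining relations of `osp(1|2)`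
realized by ungraded operators. -/
def IsOspRep {W : Type*} [AddCommGroup W] [Module ℂ W]
    (E H F X Y : Module.End ℂ W) : Prop :=
  H * E - E * H = (2 : ℂ) • E ∧
  H * F - F * H = (-2 : ℂ) • F ∧
  E * F - F * E = H ∧
  H * X - X * H = X ∧
  E * X - X * E = 0 ∧
  F * X - X * F = -Y ∧
  H * Y - Y * H = -Y ∧
  E * Y - Y * E = -X ∧
  F * Y - Y * F = 0 ∧
  X * X = E ∧
  X * Y + Y * X = H ∧
  Y * Y = -F

/-- The Casimir operator `Ω = E∘F + F∘E + (1/2)·H∘H + (1/2)·(Y∘X − X∘Y)`. -/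
noncomputable def OmegaOsp {W : Type*} [AddCommGroup W] [Module ℂ W]
    (E H F X Y : Module.End ℂ W) : Module.End ℂ W :=
  E * F + F * E + (1/2 : ℂ) • (H * H) + (1/2 : ℂ) • (Y * X - X * Y)

/-- The super-Casimir operator `Σ = X∘Y − Y∘X + (1/2)·id`. -/
noncomputable def SigmaOsp {W : Type*} [AddCommGroup W] [Module ℂ W]
    (X Y : Module.End ℂ W) : Module.End ℂ W :=
  X * Y - Y * X + (1/2 : ℂ) • (1 : Module.End ℂ W)

/-- If the Casimir `Ω` of an `osp(1|2)`-representation vanishes, then `W` is the direct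
sum of the `±1/2`-eigenspaces `W⁺ = ker(Σ − (1/2)·id)` and `W⁻ = ker(Σ + (1/2)·id)` of
the super-Casimir `Σ`; moreover the `sl(2)` Casimir `Ω₀ = E∘F + F∘E + (1/2)·H∘H` acts
as `0` on `W⁺` and as `−1/2` on `W⁻`. -/
theorem decomposition_from_zero_casimir {W : Type*} [AddCommGroup W] [Module ℂ W]
    (E H F X Y : Module.End ℂ W) (hrep : IsOspRep E H F X Y)
    (hcas : OmegaOsp E H F X Y = 0) :
    IsCompl
      (LinearMap.ker (SigmaOsp X Y - (1/2 : ℂ) • (1 : Module.End ℂ W)))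
      (LinearMap.ker (SigmaOsp X Y + (1/2 : ℂ) • (1 : Module.End ℂ W))) ∧
    (∀ v ∈ LinearMap.ker (SigmaOsp X Y - (1/2 : ℂ) • (1 : Module.End ℂ W)),
      (E * F + F * E + (1/2 : ℂ) • (H * H)) v = 0) ∧
    (∀ v ∈ LinearMap.ker (SigmaOsp X Y + (1/2 : ℂ) • (1 : Module.End ℂ W)),
      (E * F + F * E + (1/2 : ℂ) • (H * H)) v = (-(1/2) : ℂ) • v) := by
  obtain ⟨h1, h2, h3, h4, h5, h6, h7, h8, h9, h10, h11, h12⟩ := hrep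
  -- basic rewriting consequences of the relations
  have e1 : F * E = E * F - H := eq_sub_of_add_eq (sub_eq_iff_eq_add'.mp h3).symm
  have e2 : Y * X = H - X * Y := eq_sub_of_add_eq' h11
  have e3 : X * H = H * X - X := eq_sub_of_add_eq (sub_eq_iff_eq_add'.mp h4).symm
  have e4 : Y * H = H * Y + Y := by
    have h := congrArg Neg.neg h7
    rw [neg_sub, neg_neg] at h
    exact sub_eq_iff_eq_add'.mp h
  -- key quadratic identity for `X*Y`
  have key : (X*Y) * (X*Y) = H*(X*Y) - X*Y + E*F := by
    calc (X*Y) * (X*Y) = X*(Y*X)*Y := by noncomm_ring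
      _ = X*(H - X*Y)*Y := by rw [e2]
      _ = (X*H)*Y - (X*X)*(Y*Y) := by noncomm_ring
      _ = (H*X - X)*Y - E*(-F) := by rw [e3, h10, h12]
      _ = H*(X*Y) - X*Y + E*F := by noncomm_ring
  have e7 : (X*Y)*H = H*(X*Y) := by
    calc (X*Y)*H = X*(Y*H) := by noncomm_ring
      _ = X*(H*Y + Y) := by rw [e4]
      _ = (X*H)*Y + X*Y := by noncomm_ring
      _ = (H*X - X)*Y + X*Y := by rw [e3]
      _ = H*(X*Y) := by noncomm_ring
  -- main identity : S² + S = 2Ω for S = XY - YX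
  have hmain : (X*Y - Y*X)*(X*Y - Y*X) + (X*Y - Y*X)
      = (2:ℂ) • OmegaOsp E H F X Y := by
    unfold OmegaOsp
    calc (X*Y - Y*X)*(X*Y - Y*X) + (X*Y - Y*X)
        = ((X*Y)*(X*Y) + (X*Y)*(X*Y) + (X*Y)*(X*Y) + (X*Y)*(X*Y))
            - ((X*Y)*H + (X*Y)*H) - (H*(X*Y) + H*(X*Y)) + H*H + (X*Y + X*Y) - H := by
          rw [e2]; noncomm_ring
      _ = ((H*(X*Y) - X*Y + E*F) + (H*(X*Y) - X*Y + E*F) + (H*(X*Y) - X*Y + E*F)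
              + (H*(X*Y) - X*Y + E*F))
            - (H*(X*Y) + H*(X*Y)) - (H*(X*Y) + H*(X*Y)) + H*H + (X*Y + X*Y) - H := by
          rw [key, e7]
      _ = (2:ℂ)•(E*F + (E*F - H) + (1/2:ℂ)•(H*H) + (1/2:ℂ)•((H - X*Y) - X*Y)) := by
          module
      _ = (2:ℂ)•(E*F + F*E + (1/2:ℂ)•(H*H) + (1/2:ℂ)•(Y*X - X*Y)) := by
          rw [e1, e2]
  have h0 : (X*Y - Y*X)*(X*Y - Y*X) + (X*Y - Y*X) = 0 := by
    rw [hmain, hcas, smul_zero]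
  -- (Σ - 1/2)(Σ + 1/2) = S² + S = 0, and the same for the other order
  have hPQ : (SigmaOsp X Y - (1/2:ℂ) • (1 : Module.End ℂ W))
      * (SigmaOsp X Y + (1/2:ℂ) • (1 : Module.End ℂ W)) = 0 := by
    calc (SigmaOsp X Y - (1/2:ℂ) • (1 : Module.End ℂ W))
        * (SigmaOsp X Y + (1/2:ℂ) • (1 : Module.End ℂ W))
        = (X*Y - Y*X)*(X*Y - Y*X) + (X*Y - Y*X) := by
          unfold SigmaOsp; noncomm_ring
          module
      _ = 0 := h0
  have hQP : (SigmaOsp X Y + (1/2:ℂ) • (1 : Module.End ℂ W))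
      * (SigmaOsp X Y - (1/2:ℂ) • (1 : Module.End ℂ W)) = 0 := by
    calc (SigmaOsp X Y + (1/2:ℂ) • (1 : Module.End ℂ W))
        * (SigmaOsp X Y - (1/2:ℂ) • (1 : Module.End ℂ W))
        = (X*Y - Y*X)*(X*Y - Y*X) + (X*Y - Y*X) := by
          unfold SigmaOsp; noncomm_ring
          module
      _ = 0 := h0
  set P := SigmaOsp X Y - (1/2:ℂ) • (1 : Module.End ℂ W) with hPdef
  set Q := SigmaOsp X Y + (1/2:ℂ) • (1 : Module.End ℂ W) with hQdef
  have hdiff : Q - P = (1 : Module.End ℂ W) := by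
    rw [hPdef, hQdef]; module
  have hveq : ∀ v : W, Q v - P v = v := by
    intro v
    have := congrArg (fun f : Module.End ℂ W => f v) hdiff
    simpa [LinearMap.sub_apply] using this
  have hO : E*F + F*E + (1/2:ℂ)•(H*H) = (1/2:ℂ)•(X*Y - Y*X) := by
    have h0' := hcas; unfold OmegaOsp at h0'
    calc E*F + F*E + (1/2:ℂ)•(H*H)
        = (E*F + F*E + (1/2:ℂ)•(H*H) + (1/2:ℂ)•(Y*X - X*Y))
          + (1/2:ℂ)•(X*Y - Y*X) := by module
      _ = (1/2:ℂ)•(X*Y - Y*X) := by rw [h0', zero_add]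
  refine ⟨⟨?_, ?_⟩, ?_, ?_⟩
  · -- disjointness
    rw [Submodule.disjoint_def]
    intro v hv hw
    rw [LinearMap.mem_ker] at hv hw
    have := hveq v
    rw [hv, hw] at this
    simpa using this.symm
  · -- codisjointness
    rw [codisjoint_iff, eq_top_iff]
    intro v _
    refine Submodule.mem_sup.2 ⟨Q v, ?_, -(P v), ?_, ?_⟩
    · rw [LinearMap.mem_ker, ← Module.End.mul_apply, hPQ, LinearMap.zero_apply]
    · rw [LinearMap.mem_ker, map_neg, ← Module.End.mul_apply, hQP,
        LinearMap.zero_apply, neg_zero]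
    · rw [← sub_eq_add_neg]; exact hveq v
  · -- Ω₀ acts as 0 on W⁺
    intro v hv
    rw [LinearMap.mem_ker] at hv
    have hP : P = X*Y - Y*X := by rw [hPdef]; unfold SigmaOsp; abel
    rw [hO, LinearMap.smul_apply, ← hP, hv, smul_zero]
  · -- Ω₀ acts as -1/2 on W⁻
    intro v hv
    rw [LinearMap.mem_ker] at hv
    have hS : X*Y - Y*X = Q - (1 : Module.End ℂ W) := by
      rw [hQdef]; unfold SigmaOsp; module
    rw [hO, hS, LinearMap.smul_apply, LinearMap.sub_apply, hv,
      Module.End.one_apply, zero_sub, smul_neg]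
    module
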